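/- For any real θ with sin θ ≠ 0 and cos θ ≠ 0, ℝ⁴ decomposes as the orthogonal direct sum of the A(θ)-invariant planes W = span{(1,0,0,−1), (0,1,1,0)} and V = span{(1,0,0,1), (0,1,−1,0)}; W equals the kernel of S₀ and V equals the eigenspace of S₀ for eigenvalue 2, where 2S₀ = A(θ) + A(θ)ᵀ. -/

import Mathlib

open Real Matrix

noncomputable def alphaA (θ : ℝ) : Matrix (Fin 4) (Fin 4) ℝ :=
  !![1, -Real.cot θ, -Real.tan θ, 1;
     Real.cot θ, 1, -1, -Real.tan θ;
     Real.tan θ, -1, 1, -Real.cot θ;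
     1, Real.tan θ, Real.cot θ, 1]

def S₀ : Matrix (Fin 4) (Fin 4) ℝ := !![1,0,0,1; 0,1,-1,0; 0,-1,1,0; 1,0,0,1]

noncomputable def Wsub : Submodule ℝ (EuclideanSpace ℝ (Fin 4)) :=
  Submodule.span ℝ
    ({(WithLp.toLp 2 (![1,0,0,-1] : Fin 4 → ℝ) : EuclideanSpace ℝ (Fin 4)),
      (WithLp.toLp 2 (![0,1,1,0] : Fin 4 → ℝ) : EuclideanSpace ℝ (Fin 4))} : Set (EuclideanSpace ℝ (Fin 4)))

noncomputable def Vsub : Submodule ℝ (EuclideanSpace ℝ (Fin 4)) :=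
  Submodule.span ℝ
    ({(WithLp.toLp 2 (![1,0,0,1] : Fin 4 → ℝ) : EuclideanSpace ℝ (Fin 4)),
      (WithLp.toLp 2 (![0,1,-1,0] : Fin 4 → ℝ) : EuclideanSpace ℝ (Fin 4))} : Set (EuclideanSpace ℝ (Fin 4)))

lemma memW (u : EuclideanSpace ℝ (Fin 4)) : u ∈ Wsub ↔ u 3 = -u 0 ∧ u 2 = u 1 := by
  rw [Wsub, Submodule.mem_span_pair]
  constructor
  · rintro ⟨c, d, rfl⟩
    constructor <;> simp [PiLp.add_apply, PiLp.smul_apply] <;> ring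
  · rintro ⟨h3, h2⟩
    refine ⟨u 0, u 1, PiLp.ext fun i => ?_⟩
    fin_cases i <;> simp [PiLp.add_apply, PiLp.smul_apply, h3, h2]

lemma memV (u : EuclideanSpace ℝ (Fin 4)) : u ∈ Vsub ↔ u 3 = u 0 ∧ u 2 = -u 1 := by
  rw [Vsub, Submodule.mem_span_pair]
  constructor
  · rintro ⟨c, d, rfl⟩
    constructor <;> simp [PiLp.add_apply, PiLp.smul_apply] <;> ring
  · rintro ⟨h3, h2⟩
    refine ⟨u 0, u 1, PiLp.ext fun i => ?_⟩
    fin_cases i <;> simp [PiLp.add_apply, PiLp.smul_apply, h3, h2]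

theorem stmt19 (θ : ℝ) (hs : Real.sin θ ≠ 0) (hc : Real.cos θ ≠ 0) :
    Wsub ⊔ Vsub = (⊤ : Submodule ℝ (EuclideanSpace ℝ (Fin 4))) ∧
    Vsub = Wsubᗮ ∧
    (∀ u ∈ Wsub, (WithLp.toLp 2 ((alphaA θ).mulVec u : Fin 4 → ℝ) : EuclideanSpace ℝ (Fin 4)) ∈ Wsub) ∧
    (∀ u ∈ Vsub, (WithLp.toLp 2 ((alphaA θ).mulVec u : Fin 4 → ℝ) : EuclideanSpace ℝ (Fin 4)) ∈ Vsub) ∧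
    (∀ u : EuclideanSpace ℝ (Fin 4), u ∈ Wsub ↔ S₀.mulVec u = 0) ∧
    (∀ u : EuclideanSpace ℝ (Fin 4), u ∈ Vsub ↔
      (WithLp.toLp 2 (S₀.mulVec u : Fin 4 → ℝ) : EuclideanSpace ℝ (Fin 4)) = (2 : ℝ) • u) ∧
    (2 : ℝ) • S₀ = alphaA θ + (alphaA θ)ᵀ := by
  refine ⟨?_, ?_, ?_, ?_, ?_, ?_, ?_⟩
  · rw [eq_top_iff]
    intro u _
    refine Submodule.mem_sup.2 ⟨WithLp.toLp 2 (![(u 0 - u 3)/2, (u 1 + u 2)/2, (u 1 + u 2)/2, -((u 0 - u 3)/2)] : Fin 4 → ℝ), ?_, WithLp.toLp 2 (![(u 0 + u 3)/2, (u 1 - u 2)/2, -((u 1 - u 2)/2), (u 0 + u 3)/2] : Fin 4 → ℝ), ?_, ?_⟩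
    · rw [memW]; constructor <;> simp
    · rw [memV]; constructor <;> simp
    · ext i; fin_cases i <;> simp [PiLp.add_apply] <;> ring
  · apply le_antisymm
    · intro v hv
      rw [memV] at hv
      rw [Submodule.mem_orthogonal]
      intro w hw
      rw [memW] at hw
      simp [PiLp.inner_apply, Fin.sum_univ_four, hv.1, hv.2, hw.1, hw.2]
    · intro u hu
      rw [Submodule.mem_orthogonal] at hu
      have h1 := hu _ (Submodule.subset_span (Set.mem_insert _ _))
      have h2 := hu _ (Submodule.subset_span (Set.mem_insert_of_mem _ rfl))
      simp [PiLp.inner_apply, Fin.sum_univ_four] at h1 h2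
      rw [memV]
      constructor <;> linarith
  · intro u hu
    rw [memW] at hu ⊢
    simp [alphaA, Matrix.mulVec, dotProduct, Fin.sum_univ_four, hu.1, hu.2]
    ring_nf
    constructor <;> trivial
  · intro u hu
    rw [memV] at hu ⊢
    simp [alphaA, Matrix.mulVec, dotProduct, Fin.sum_univ_four, hu.1, hu.2]
    constructor <;> ring
  · intro u
    rw [memW]
    constructor
    · rintro ⟨h3, h2⟩
      funext i
      fin_cases i <;> simp [S₀, Matrix.mulVec, dotProduct, Fin.sum_univ_four, h3, h2]
    · intro h
      have h0 := congrFun h 0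
      have h1 := congrFun h 1
      simp [S₀, Matrix.mulVec, dotProduct, Fin.sum_univ_four] at h0 h1
      constructor <;> linarith
  · intro u
    rw [memV]
    constructor
    · rintro ⟨h3, h2⟩
      ext i
      fin_cases i <;> simp [S₀, Matrix.mulVec, dotProduct, Fin.sum_univ_four, PiLp.smul_apply, h3, h2] <;> ring
    · intro h
      have h0 := congrArg (fun v => v 0) h
      have h1 := congrArg (fun v => v 1) h
      simp [S₀, Matrix.mulVec, dotProduct, Fin.sum_univ_four, PiLp.smul_apply] at h0 h1
      constructor <;> linarith
  · ext i j
    rw [Matrix.add_apply, Matrix.transpose_apply, Matrix.smul_apply]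
    fin_cases i <;> fin_cases j <;> simp [S₀, alphaA] <;> ring
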